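/- If a logic 𝕃 exhibits a critical loop, then there exists a base change operator ∘ for 𝕃 satisfying (G1)–(G6) that is not total preorder representable. -/

import Mathlib

namespace BeliefRev

variable {L Ω : Type*}

/-- The models of a belief base (a finite set of sentences). -/
def Mod (sat : Ω → L → Prop) (K : Finset L) : Set Ω :=
  {ω | ∀ φ ∈ K, sat ω φ}

/-- `min(S, r)`: the elements of `S` that are `r`-below every element of `S`. -/
def minSet (S : Set Ω) (r : Ω → Ω → Prop) : Set Ω :=
  {ω ∈ S | ∀ ω' ∈ S, r ω ω'}

/-- A binary relation is total. -/
def TotalRel (r : Ω → Ω → Prop) : Prop :=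
  ∀ ω₁ ω₂, r ω₁ ω₂ ∨ r ω₂ ω₁

/-- The strict part of a relation: `ω₁ ≺ ω₂` iff `ω₁ ⪯ ω₂` and not `ω₂ ⪯ ω₁`. -/
def StrictRel (r : Ω → Ω → Prop) (ω₁ ω₂ : Ω) : Prop :=
  r ω₁ ω₂ ∧ ¬ r ω₂ ω₁

/-- Postulate (G1). -/
def G1 (sat : Ω → L → Prop) (op : Finset L → Finset L → Finset L) : Prop :=
  ∀ K Γ, Mod sat (op K Γ) ⊆ Mod sat Γ

/-- Postulate (G2). -/
def G2 [DecidableEq L] (sat : Ω → L → Prop) (op : Finset L → Finset L → Finset L) : Prop :=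
  ∀ K Γ, (Mod sat (K ∪ Γ)).Nonempty → Mod sat (op K Γ) = Mod sat (K ∪ Γ)

/-- Postulate (G3). -/
def G3 (sat : Ω → L → Prop) (op : Finset L → Finset L → Finset L) : Prop :=
  ∀ K Γ, (Mod sat Γ).Nonempty → (Mod sat (op K Γ)).Nonempty

/-- Postulate (G4). -/
def G4 (sat : Ω → L → Prop) (op : Finset L → Finset L → Finset L) : Prop :=
  ∀ K₁ K₂ Γ₁ Γ₂, Mod sat K₁ = Mod sat K₂ → Mod sat Γ₁ = Mod sat Γ₂ →
    Mod sat (op K₁ Γ₁) = Mod sat (op K₂ Γ₂)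

/-- Postulate (G5). -/
def G5 [DecidableEq L] (sat : Ω → L → Prop) (op : Finset L → Finset L → Finset L) : Prop :=
  ∀ K Γ₁ Γ₂, Mod sat (op K Γ₁) ∩ Mod sat Γ₂ ⊆ Mod sat (op K (Γ₁ ∪ Γ₂))

/-- Postulate (G6). -/
def G6 [DecidableEq L] (sat : Ω → L → Prop) (op : Finset L → Finset L → Finset L) : Prop :=
  ∀ K Γ₁ Γ₂, (Mod sat (op K Γ₁) ∩ Mod sat Γ₂).Nonempty →
    Mod sat (op K (Γ₁ ∪ Γ₂)) ⊆ Mod sat (op K Γ₁) ∩ Mod sat Γ₂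

/-- The conjunction of postulates (G1)–(G6). -/
def AGM [DecidableEq L] (sat : Ω → L → Prop) (op : Finset L → Finset L → Finset L) : Prop :=
  G1 sat op ∧ G2 sat op ∧ G3 sat op ∧ G4 sat op ∧ G5 sat op ∧ G6 sat op

/-- The canonical relation `⪯ᵒ_K` obtained from a base change operator. -/
def canonicalRel (sat : Ω → L → Prop) (op : Finset L → Finset L → Finset L)
    (K : Finset L) (ω₁ ω₂ : Ω) : Prop :=
  ∀ Γ : Finset L, ω₁ ∈ Mod sat Γ → ω₂ ∈ Mod sat Γ →
    (ω₁ ∈ Mod sat (op K Γ) ∨ ω₂ ∉ Mod sat (op K Γ))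

/-- A relation is min-retractive. -/
def MinRetractive (sat : Ω → L → Prop) (r : Ω → Ω → Prop) : Prop :=
  ∀ (Γ : Finset L) (ω ω' : Ω), ω ∈ Mod sat Γ → ω' ∈ Mod sat Γ →
    r ω' ω → ω ∈ minSet (Mod sat Γ) r → ω' ∈ minSet (Mod sat Γ) r

/-- A relation is min-complete. -/
def MinComplete (sat : Ω → L → Prop) (r : Ω → Ω → Prop) : Prop :=
  ∀ Γ : Finset L, (Mod sat Γ).Nonempty → (minSet (Mod sat Γ) r).Nonempty

/-- A relation is min-friendly: min-retractive and min-complete. -/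
def MinFriendly (sat : Ω → L → Prop) (r : Ω → Ω → Prop) : Prop :=
  MinRetractive sat r ∧ MinComplete sat r

/-- A relation is min-expressible. -/
def MinExpressible (sat : Ω → L → Prop) (r : Ω → Ω → Prop) : Prop :=
  ∀ Γ : Finset L, ∃ B : Finset L, Mod sat B = minSet (Mod sat Γ) r

/-- An assignment maps each belief base to a *total* relation on interpretations. -/
def IsAssignment (assign : Finset L → Ω → Ω → Prop) : Prop :=
  ∀ K : Finset L, TotalRel (assign K)

/-- Faithfulness of an assignment: conditions (F1), (F2) and (F3). -/
def Faithful (sat : Ω → L → Prop) (assign : Finset L → Ω → Ω → Prop) : Prop :=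
  (∀ (K : Finset L) (ω ω' : Ω), ω ∈ Mod sat K → ω' ∈ Mod sat K →
      ¬ StrictRel (assign K) ω ω') ∧
  (∀ (K : Finset L) (ω ω' : Ω), ω ∈ Mod sat K → ω' ∉ Mod sat K →
      StrictRel (assign K) ω ω') ∧
  (∀ K K' : Finset L, Mod sat K = Mod sat K' → assign K = assign K')

/-- Compatibility of a base change operator with an assignment. -/
def Compatible (sat : Ω → L → Prop) (op : Finset L → Finset L → Finset L)
    (assign : Finset L → Ω → Ω → Prop) : Prop :=
  ∀ K Γ : Finset L, Mod sat (op K Γ) = minSet (Mod sat Γ) (assign K)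

/-- Total preorder representability: there is a faithful assignment compatible with `op`
whose relations are all min-complete and transitive (hence total preorders). -/
def TotalPreorderRepresentable (sat : Ω → L → Prop)
    (op : Finset L → Finset L → Finset L) : Prop :=
  ∃ assign : Finset L → Ω → Ω → Prop,
    IsAssignment assign ∧ Faithful sat assign ∧
    (∀ K : Finset L, MinComplete sat (assign K)) ∧
    (∀ K : Finset L, Transitive (assign K)) ∧
    Compatible sat op assign

/-- A pair of interpretations is detached from `op` in `K`. -/
def Detached (sat : Ω → L → Prop) (op : Finset L → Finset L → Finset L)
    (K : Finset L) (ω ω' : Ω) : Prop :=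
  ∀ Γ : Finset L, ω ∉ Mod sat (op K Γ) ∧ ω' ∉ Mod sat (op K Γ)

/-- Three belief bases form a critical loop for the logic. -/
def CriticalLoop [DecidableEq L] (sat : Ω → L → Prop) (Γ₀ Γ₁ Γ₂ : Finset L) : Prop :=
  ∃ K Γ'₀ Γ'₁ Γ'₂ : Finset L,
    (Mod sat (K ∪ Γ₀) = ∅ ∧ Mod sat (K ∪ Γ₁) = ∅ ∧ Mod sat (K ∪ Γ₂) = ∅) ∧
    ((Mod sat Γ'₀).Nonempty ∧ Mod sat Γ'₀ ⊆ (Mod sat Γ₀ ∩ Mod sat Γ₁) \ Mod sat Γ₂) ∧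
    ((Mod sat Γ'₁).Nonempty ∧ Mod sat Γ'₁ ⊆ (Mod sat Γ₁ ∩ Mod sat Γ₂) \ Mod sat Γ₀) ∧
    ((Mod sat Γ'₂).Nonempty ∧ Mod sat Γ'₂ ⊆ (Mod sat Γ₂ ∩ Mod sat Γ₀) \ Mod sat Γ₁) ∧
    (∀ Γ : Finset L, (Mod sat (Γ'₀ ∪ Γ)).Nonempty → (Mod sat (Γ'₁ ∪ Γ)).Nonempty →
      (Mod sat (Γ'₂ ∪ Γ)).Nonempty →
      ∃ Γ' : Finset L, (Mod sat Γ').Nonempty ∧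
        Mod sat Γ' ⊆ Mod sat Γ \ (Mod sat Γ₀ ∪ Mod sat Γ₁ ∪ Mod sat Γ₂))

/-- The logic admits (exhibits) a critical loop. -/
def AdmitsCriticalLoop [DecidableEq L] (sat : Ω → L → Prop) : Prop :=
  ∃ Γ₀ Γ₁ Γ₂ : Finset L, CriticalLoop sat Γ₀ Γ₁ Γ₂

/-- A logic is disjunctive: any two bases have a base acting as their disjunction. -/
def Disjunctive (sat : Ω → L → Prop) : Prop :=
  ∀ Γ₁ Γ₂ : Finset L, ∃ Δ : Finset L, Mod sat Δ = Mod sat Γ₁ ∪ Mod sat Γ₂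

section LoopConstruction

variable {L Ω : Type*} [DecidableEq L]

private lemma Mod_union' (sat : Ω → L → Prop) (A B : Finset L) :
    Mod sat (A ∪ B) = Mod sat A ∩ Mod sat B := by
  ext ω
  simp only [Mod, Set.mem_setOf_eq, Set.mem_inter_iff, Finset.mem_union, or_imp, forall_and]

/-- Candidate bases: bases whose models avoid `X` and meet `S`. -/
def cand (sat : Ω → L → Prop) (X S : Set Ω) : Set (Finset L) :=
  {B | Mod sat B ⊆ Xᶜ ∧ (S ∩ Mod sat B).Nonempty}

private lemma cand_mono (sat : Ω → L → Prop) (X : Set Ω) {D S : Set Ω} (h : D ⊆ S) :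
    cand sat X D ⊆ cand sat X S := by
  rintro B ⟨h1, x, hx1, hx2⟩
  exact ⟨h1, x, h hx1, hx2⟩

private lemma wfWOR (α : Type*) : WellFounded (@WellOrderingRel α) := IsWellFounded.wf

open Classical in
/-- The model-level revision function used in the critical-loop construction. -/
noncomputable def FOp (sat : Ω → L → Prop) (X κ M₀ M₁ M₂ S : Set Ω) : Set Ω :=
  if (S ∩ κ).Nonempty then S ∩ κ
  else if h : (cand sat X S).Nonempty then
    S ∩ Mod sat ((wfWOR (Finset L)).min (cand sat X S) h)
  else if (S ∩ M₀).Nonempty ∧ ¬ (S ∩ M₁).Nonempty then S ∩ M₀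
  else if (S ∩ M₁).Nonempty ∧ ¬ (S ∩ M₂).Nonempty then S ∩ M₁
  else if (S ∩ M₂).Nonempty then S ∩ M₂
  else S

section FOpLemmas

variable (sat : Ω → L → Prop) (X κ M₀ M₁ M₂ S : Set Ω)

private lemma FOp_pos1 (h : (S ∩ κ).Nonempty) : FOp sat X κ M₀ M₁ M₂ S = S ∩ κ := by
  simp only [FOp, if_pos h]

private lemma FOp_pos2 (h1 : ¬ (S ∩ κ).Nonempty) (h2 : (cand sat X S).Nonempty) :
    FOp sat X κ M₀ M₁ M₂ S = S ∩ Mod sat ((wfWOR (Finset L)).min (cand sat X S) h2) := by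
  simp only [FOp, if_neg h1, dif_pos h2]

private lemma FOp_pos3a (h1 : ¬ (S ∩ κ).Nonempty) (h2 : ¬ (cand sat X S).Nonempty)
    (h3 : (S ∩ M₀).Nonempty ∧ ¬ (S ∩ M₁).Nonempty) :
    FOp sat X κ M₀ M₁ M₂ S = S ∩ M₀ := by
  simp only [FOp, if_neg h1, dif_neg h2, if_pos h3]

private lemma FOp_pos3b (h1 : ¬ (S ∩ κ).Nonempty) (h2 : ¬ (cand sat X S).Nonempty)
    (h3 : ¬ ((S ∩ M₀).Nonempty ∧ ¬ (S ∩ M₁).Nonempty))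
    (h4 : (S ∩ M₁).Nonempty ∧ ¬ (S ∩ M₂).Nonempty) :
    FOp sat X κ M₀ M₁ M₂ S = S ∩ M₁ := by
  simp only [FOp, if_neg h1, dif_neg h2, if_neg h3, if_pos h4]

private lemma FOp_pos3c (h1 : ¬ (S ∩ κ).Nonempty) (h2 : ¬ (cand sat X S).Nonempty)
    (h3 : ¬ ((S ∩ M₀).Nonempty ∧ ¬ (S ∩ M₁).Nonempty))
    (h4 : ¬ ((S ∩ M₁).Nonempty ∧ ¬ (S ∩ M₂).Nonempty))
    (h5 : (S ∩ M₂).Nonempty) :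
    FOp sat X κ M₀ M₁ M₂ S = S ∩ M₂ := by
  simp only [FOp, if_neg h1, dif_neg h2, if_neg h3, if_neg h4, if_pos h5]

private lemma FOp_neg (h1 : ¬ (S ∩ κ).Nonempty) (h2 : ¬ (cand sat X S).Nonempty)
    (h3 : ¬ ((S ∩ M₀).Nonempty ∧ ¬ (S ∩ M₁).Nonempty))
    (h4 : ¬ ((S ∩ M₁).Nonempty ∧ ¬ (S ∩ M₂).Nonempty))
    (h5 : ¬ (S ∩ M₂).Nonempty) :
    FOp sat X κ M₀ M₁ M₂ S = S := by
  simp only [FOp, if_neg h1, dif_neg h2, if_neg h3, if_neg h4, if_neg h5]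

private lemma FOp_subset : FOp sat X κ M₀ M₁ M₂ S ⊆ S := by
  unfold FOp
  split_ifs <;> first | exact Set.inter_subset_left | exact subset_rfl

private lemma FOp_nonempty (hS : S.Nonempty) : (FOp sat X κ M₀ M₁ M₂ S).Nonempty := by
  unfold FOp
  split_ifs with h1 h2 h3 h4 h5
  · exact h1
  · exact ((wfWOR (Finset L)).min_mem (cand sat X S) h2).2
  · exact h3.1
  · exact h4.1
  · exact h5
  · exact hS

end FOpLemmas

private lemma FOp_arrow (sat : Ω → L → Prop) (X κ M₀ M₁ M₂ S S' : Set Ω)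
    (hexS : ¬ (cand sat X S).Nonempty → (S ∩ M₀).Nonempty → (S ∩ M₁).Nonempty →
      (S ∩ M₂).Nonempty → False)
    (hN : (FOp sat X κ M₀ M₁ M₂ S ∩ S').Nonempty) :
    FOp sat X κ M₀ M₁ M₂ (S ∩ S') = FOp sat X κ M₀ M₁ M₂ S ∩ S' := by
  set D := S ∩ S' with hD
  have hsub : D ⊆ S := Set.inter_subset_left
  by_cases h1 : (S ∩ κ).Nonempty
  · rw [FOp_pos1 sat X κ M₀ M₁ M₂ S h1] at hN ⊢
    have hA : D ∩ κ = (S ∩ κ) ∩ S' := by rw [hD, Set.inter_right_comm]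
    have h1' : (D ∩ κ).Nonempty := by rw [hA]; exact hN
    rw [FOp_pos1 sat X κ M₀ M₁ M₂ D h1', hA]
  · have h1' : ¬ (D ∩ κ).Nonempty := by
      intro ⟨x, hx⟩; exact h1 ⟨x, hsub hx.1, hx.2⟩
    by_cases h2 : (cand sat X S).Nonempty
    · rw [FOp_pos2 sat X κ M₀ M₁ M₂ S h1 h2] at hN ⊢
      set B₀ := (wfWOR (Finset L)).min (cand sat X S) h2 with hB₀
      have hB₀mem : B₀ ∈ cand sat X S := (wfWOR (Finset L)).min_mem _ h2
      have hA : D ∩ Mod sat B₀ = (S ∩ Mod sat B₀) ∩ S' := by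
        rw [hD, Set.inter_right_comm]
      have hB₀D : B₀ ∈ cand sat X D := ⟨hB₀mem.1, by rw [hA]; exact hN⟩
      have h2' : (cand sat X D).Nonempty := ⟨B₀, hB₀D⟩
      rw [FOp_pos2 sat X κ M₀ M₁ M₂ D h1' h2']
      set B₁ := (wfWOR (Finset L)).min (cand sat X D) h2' with hB₁
      have hB₁mem : B₁ ∈ cand sat X D := (wfWOR (Finset L)).min_mem _ h2'
      have hnot1 : ¬ WellOrderingRel B₀ B₁ := (wfWOR (Finset L)).not_lt_min _ hB₀D
      have hnot2 : ¬ WellOrderingRel B₁ B₀ :=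
        (wfWOR (Finset L)).not_lt_min _ (cand_mono sat X hsub hB₁mem)
      have hBeq : B₁ = B₀ := by
        rcases trichotomous (r := @WellOrderingRel (Finset L)) B₁ B₀ with h | h | h
        · exact absurd h hnot2
        · exact h
        · exact absurd h hnot1
      rw [hBeq, hA]
    · have h2' : ¬ (cand sat X D).Nonempty := fun hne =>
        h2 (hne.mono (cand_mono sat X hsub) |>.elim (fun x hx => ⟨x, hx⟩))
      by_cases h3 : (S ∩ M₀).Nonempty ∧ ¬ (S ∩ M₁).Nonempty
      · rw [FOp_pos3a sat X κ M₀ M₁ M₂ S h1 h2 h3] at hN ⊢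
        have hA : D ∩ M₀ = (S ∩ M₀) ∩ S' := by rw [hD, Set.inter_right_comm]
        have hb : ¬ (D ∩ M₁).Nonempty := by
          intro ⟨x, hx⟩; exact h3.2 ⟨x, hsub hx.1, hx.2⟩
        have h3' : (D ∩ M₀).Nonempty ∧ ¬ (D ∩ M₁).Nonempty :=
          ⟨by rw [hA]; exact hN, hb⟩
        rw [FOp_pos3a sat X κ M₀ M₁ M₂ D h1' h2' h3', hA]
      · by_cases h4 : (S ∩ M₁).Nonempty ∧ ¬ (S ∩ M₂).Nonempty
        · rw [FOp_pos3b sat X κ M₀ M₁ M₂ S h1 h2 h3 h4] at hN ⊢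
          have hA : D ∩ M₁ = (S ∩ M₁) ∩ S' := by rw [hD, Set.inter_right_comm]
          have hb : (D ∩ M₁).Nonempty := by rw [hA]; exact hN
          have h3' : ¬ ((D ∩ M₀).Nonempty ∧ ¬ (D ∩ M₁).Nonempty) := by
            rintro ⟨-, hc⟩; exact hc hb
          have hc : ¬ (D ∩ M₂).Nonempty := by
            intro ⟨x, hx⟩; exact h4.2 ⟨x, hsub hx.1, hx.2⟩
          rw [FOp_pos3b sat X κ M₀ M₁ M₂ D h1' h2' h3' ⟨hb, hc⟩, hA]
        · by_cases h5 : (S ∩ M₂).Nonempty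
          · rw [FOp_pos3c sat X κ M₀ M₁ M₂ S h1 h2 h3 h4 h5] at hN ⊢
            have hA : D ∩ M₂ = (S ∩ M₂) ∩ S' := by rw [hD, Set.inter_right_comm]
            have hc : (D ∩ M₂).Nonempty := by rw [hA]; exact hN
            have ha : ¬ (S ∩ M₀).Nonempty := by
              intro ha
              have hb : (S ∩ M₁).Nonempty := by
                by_contra hb; exact h3 ⟨ha, hb⟩
              exact hexS h2 ha hb h5
            have h3' : ¬ ((D ∩ M₀).Nonempty ∧ ¬ (D ∩ M₁).Nonempty) := by
              rintro ⟨⟨x, hx⟩, -⟩; exact ha ⟨x, hsub hx.1, hx.2⟩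
            have h4' : ¬ ((D ∩ M₁).Nonempty ∧ ¬ (D ∩ M₂).Nonempty) := by
              rintro ⟨-, hcc⟩; exact hcc hc
            rw [FOp_pos3c sat X κ M₀ M₁ M₂ D h1' h2' h3' h4' hc, hA]
          · -- all flags false
            have hb : ¬ (S ∩ M₁).Nonempty := by
              intro hb; exact h4 ⟨hb, h5⟩
            have ha : ¬ (S ∩ M₀).Nonempty := by
              intro ha; exact h3 ⟨ha, hb⟩
            rw [FOp_neg sat X κ M₀ M₁ M₂ S h1 h2 h3 h4 h5] at hN ⊢
            have ha' : ¬ (D ∩ M₀).Nonempty := by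
              intro ⟨x, hx⟩; exact ha ⟨x, hsub hx.1, hx.2⟩
            have hb' : ¬ (D ∩ M₁).Nonempty := by
              intro ⟨x, hx⟩; exact hb ⟨x, hsub hx.1, hx.2⟩
            have hc' : ¬ (D ∩ M₂).Nonempty := by
              intro ⟨x, hx⟩; exact h5 ⟨x, hsub hx.1, hx.2⟩
            rw [FOp_neg sat X κ M₀ M₁ M₂ D h1' h2' (by rintro ⟨hx, -⟩; exact ha' hx)
              (by rintro ⟨hx, -⟩; exact hb' hx) hc']

/-- The trivial (full-meet-style) model-level operator. -/
noncomputable def GOp (κ' S : Set Ω) : Set Ω :=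
  haveI := Classical.propDecidable ((S ∩ κ').Nonempty)
  if (S ∩ κ').Nonempty then S ∩ κ' else S

private lemma GOp_pos {κ' S : Set Ω} (h : (S ∩ κ').Nonempty) : GOp κ' S = S ∩ κ' := by
  simp only [GOp, if_pos h]

private lemma GOp_neg {κ' S : Set Ω} (h : ¬ (S ∩ κ').Nonempty) : GOp κ' S = S := by
  simp only [GOp, if_neg h]

private lemma GOp_subset (κ' S : Set Ω) : GOp κ' S ⊆ S := by
  unfold GOp; split_ifs <;> first | exact Set.inter_subset_left | exact subset_rfl

private lemma GOp_nonempty (κ' S : Set Ω) (hS : S.Nonempty) : (GOp κ' S).Nonempty := by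
  unfold GOp; split_ifs with h
  · exact h
  · exact hS

private lemma GOp_arrow (κ' S S' : Set Ω) (hN : (GOp κ' S ∩ S').Nonempty) :
    GOp κ' (S ∩ S') = GOp κ' S ∩ S' := by
  by_cases h : (S ∩ κ').Nonempty
  · rw [GOp_pos h] at hN ⊢
    have hA : (S ∩ S') ∩ κ' = (S ∩ κ') ∩ S' := Set.inter_right_comm S S' κ'
    rw [GOp_pos (by rw [hA]; exact hN), hA]
  · rw [GOp_neg h] at hN ⊢
    have h' : ¬ ((S ∩ S') ∩ κ').Nonempty := by
      intro ⟨x, hx⟩; exact h ⟨x, hx.1.1, hx.2⟩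
    rw [GOp_neg h']

open Classical in
/-- The base change operator built from a critical loop. -/
noncomputable def loopOp (sat : Ω → L → Prop) (K Γ₀ Γ₁ Γ₂ G₀ G₁ G₂ : Finset L)
    (K₁ Γ : Finset L) : Finset L :=
  if Mod sat K₁ = Mod sat K then
    if (Mod sat Γ ∩ Mod sat K).Nonempty then K ∪ Γ
    else if h : (cand sat (Mod sat Γ₀ ∪ Mod sat Γ₁ ∪ Mod sat Γ₂) (Mod sat Γ)).Nonempty then
      Γ ∪ (wfWOR (Finset L)).min
        (cand sat (Mod sat Γ₀ ∪ Mod sat Γ₁ ∪ Mod sat Γ₂) (Mod sat Γ)) h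
    else if (Mod sat Γ ∩ Mod sat G₀).Nonempty ∧ ¬ (Mod sat Γ ∩ Mod sat G₁).Nonempty then Γ ∪ G₀
    else if (Mod sat Γ ∩ Mod sat G₁).Nonempty ∧ ¬ (Mod sat Γ ∩ Mod sat G₂).Nonempty then Γ ∪ G₁
    else if (Mod sat Γ ∩ Mod sat G₂).Nonempty then Γ ∪ G₂
    else Γ
  else if (Mod sat Γ ∩ Mod sat K₁).Nonempty then K₁ ∪ Γ else Γ

private lemma mod_loopOp (sat : Ω → L → Prop) (K Γ₀ Γ₁ Γ₂ G₀ G₁ G₂ K₁ Γ : Finset L) :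
    Mod sat (loopOp sat K Γ₀ Γ₁ Γ₂ G₀ G₁ G₂ K₁ Γ) =
      haveI := Classical.propDecidable (Mod sat K₁ = Mod sat K)
      if Mod sat K₁ = Mod sat K then
        FOp sat (Mod sat Γ₀ ∪ Mod sat Γ₁ ∪ Mod sat Γ₂) (Mod sat K)
          (Mod sat G₀) (Mod sat G₁) (Mod sat G₂) (Mod sat Γ)
      else GOp (Mod sat K₁) (Mod sat Γ) := by
  set X := Mod sat Γ₀ ∪ Mod sat Γ₁ ∪ Mod sat Γ₂
  set S := Mod sat Γ
  by_cases hK : Mod sat K₁ = Mod sat K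
  · simp only [hK, if_pos]
    by_cases h1 : (S ∩ Mod sat K).Nonempty
    · rw [FOp_pos1 sat X _ _ _ _ S h1]
      simp only [loopOp, if_pos hK, if_pos h1]
      rw [if_pos h1, Mod_union', Set.inter_comm]
    · by_cases h2 : (cand sat X S).Nonempty
      · rw [FOp_pos2 sat X _ _ _ _ S h1 h2]
        simp only [loopOp, if_pos hK, if_neg h1, dif_pos h2]
        rw [if_neg h1, dif_pos h2, Mod_union']
      · by_cases h3 : (S ∩ Mod sat G₀).Nonempty ∧ ¬ (S ∩ Mod sat G₁).Nonempty
        · rw [FOp_pos3a sat X _ _ _ _ S h1 h2 h3]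
          simp only [loopOp, if_pos hK, if_neg h1, dif_neg h2, if_pos h3]
          rw [if_neg h1, dif_neg h2, if_pos h3, Mod_union']
        · by_cases h4 : (S ∩ Mod sat G₁).Nonempty ∧ ¬ (S ∩ Mod sat G₂).Nonempty
          · rw [FOp_pos3b sat X _ _ _ _ S h1 h2 h3 h4]
            simp only [loopOp, if_pos hK, if_neg h1, dif_neg h2, if_neg h3, if_pos h4]
            rw [if_neg h1, dif_neg h2, if_neg h3, if_pos h4, Mod_union']
          · by_cases h5 : (S ∩ Mod sat G₂).Nonempty
            · rw [FOp_pos3c sat X _ _ _ _ S h1 h2 h3 h4 h5]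
              simp only [loopOp, if_pos hK, if_neg h1, dif_neg h2, if_neg h3, if_neg h4,
                if_pos h5]
              rw [if_neg h1, dif_neg h2, if_neg h3, if_neg h4, if_pos h5, Mod_union']
            · rw [FOp_neg sat X _ _ _ _ S h1 h2 h3 h4 h5]
              simp only [loopOp, if_pos hK, if_neg h1, dif_neg h2, if_neg h3, if_neg h4,
                if_neg h5]
              rw [if_neg h1, dif_neg h2, if_neg h3, if_neg h4, if_neg h5]
  · simp only [hK, if_neg, if_false]
    by_cases h1 : (S ∩ Mod sat K₁).Nonempty
    · rw [GOp_pos h1]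
      simp only [loopOp, if_neg hK, if_pos h1]
      rw [if_pos h1, Mod_union', Set.inter_comm]
    · rw [GOp_neg h1]
      simp only [loopOp, if_neg hK, if_neg h1]
      rw [if_neg h1]

end LoopConstruction

/-- If the logic exhibits a critical loop, then there is a base
change operator satisfying (G1)–(G6) that is not total preorder representable. -/
theorem exists_non_representable_of_criticalLoop {L Ω : Type*} [DecidableEq L]
    (sat : Ω → L → Prop) (h : AdmitsCriticalLoop sat) :
    ∃ op : Finset L → Finset L → Finset L,
      AGM sat op ∧ ¬ TotalPreorderRepresentable sat op := by
  classical
  obtain ⟨Γ₀, Γ₁, Γ₂, K, G₀, G₁, G₂, ⟨hK0, hK1, hK2⟩, ⟨hne0, hsub0⟩, ⟨hne1, hsub1⟩,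
    ⟨hne2, hsub2⟩, h3⟩ := h
  refine ⟨loopOp sat K Γ₀ Γ₁ Γ₂ G₀ G₁ G₂, ?_, ?_⟩
  · -- AGM postulates
    have hex : ∀ Γa : Finset L,
        ¬ (cand sat (Mod sat Γ₀ ∪ Mod sat Γ₁ ∪ Mod sat Γ₂) (Mod sat Γa)).Nonempty →
        (Mod sat Γa ∩ Mod sat G₀).Nonempty → (Mod sat Γa ∩ Mod sat G₁).Nonempty →
        (Mod sat Γa ∩ Mod sat G₂).Nonempty → False := by
      intro Γa hc h0 h1 h2
      obtain ⟨Γ', hΓ'ne, hΓ'sub⟩ := h3 Γa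
        (by rw [Mod_union']; exact h0.imp fun x hx => ⟨hx.2, hx.1⟩)
        (by rw [Mod_union']; exact h1.imp fun x hx => ⟨hx.2, hx.1⟩)
        (by rw [Mod_union']; exact h2.imp fun x hx => ⟨hx.2, hx.1⟩)
      refine hc ⟨Γ', fun x hx => (hΓ'sub hx).2, ?_⟩
      obtain ⟨x, hx⟩ := hΓ'ne
      exact ⟨x, (hΓ'sub hx).1, hx⟩
    have key : ∀ K₁ Γa Γb : Finset L,
        (Mod sat (loopOp sat K Γ₀ Γ₁ Γ₂ G₀ G₁ G₂ K₁ Γa) ∩ Mod sat Γb).Nonempty →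
        Mod sat (loopOp sat K Γ₀ Γ₁ Γ₂ G₀ G₁ G₂ K₁ (Γa ∪ Γb)) =
          Mod sat (loopOp sat K Γ₀ Γ₁ Γ₂ G₀ G₁ G₂ K₁ Γa) ∩ Mod sat Γb := by
      intro K₁ Γa Γb hN
      rw [mod_loopOp sat K Γ₀ Γ₁ Γ₂ G₀ G₁ G₂ K₁ Γa] at hN ⊢
      rw [mod_loopOp sat K Γ₀ Γ₁ Γ₂ G₀ G₁ G₂ K₁ (Γa ∪ Γb), Mod_union']
      by_cases hK : Mod sat K₁ = Mod sat K
      · simp only [if_pos hK] at hN ⊢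
        exact FOp_arrow sat _ _ _ _ _ _ _ (hex Γa) hN
      · simp only [if_neg hK] at hN ⊢
        exact GOp_arrow _ _ _ hN
    refine ⟨?_, ?_, ?_, ?_, ?_, ?_⟩
    · -- G1
      intro K₁ Γ
      rw [mod_loopOp]
      by_cases hK : Mod sat K₁ = Mod sat K
      · rw [if_pos hK]; exact FOp_subset sat _ _ _ _ _ _
      · rw [if_neg hK]; exact GOp_subset _ _
    · -- G2
      intro K₁ Γ hne
      rw [Mod_union'] at hne ⊢
      rw [mod_loopOp]
      by_cases hK : Mod sat K₁ = Mod sat K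
      · rw [if_pos hK, FOp_pos1 sat _ _ _ _ _ _
          (by rw [← hK]; exact hne.imp fun x hx => ⟨hx.2, hx.1⟩), hK, Set.inter_comm]
      · rw [if_neg hK, GOp_pos (hne.imp fun x hx => ⟨hx.2, hx.1⟩), Set.inter_comm]
    · -- G3
      intro K₁ Γ hne
      rw [mod_loopOp]
      by_cases hK : Mod sat K₁ = Mod sat K
      · rw [if_pos hK]; exact FOp_nonempty sat _ _ _ _ _ _ hne
      · rw [if_neg hK]; exact GOp_nonempty _ _ hne
    · -- G4
      intro K₁ K₂ Γa Γb hKK hΓΓ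
      rw [mod_loopOp, mod_loopOp, hKK, hΓΓ]
    · -- G5
      intro K₁ Γa Γb x hx
      rw [key K₁ Γa Γb ⟨x, hx⟩]
      exact hx
    · -- G6
      intro K₁ Γa Γb hN
      rw [key K₁ Γa Γb hN]
  · -- not total preorder representable
    rintro ⟨assign, -, -, -, hTrans, hCompat⟩
    have hXsub0 : Mod sat Γ₀ ⊆ Mod sat Γ₀ ∪ Mod sat Γ₁ ∪ Mod sat Γ₂ :=
      fun x hx => Or.inl (Or.inl hx)
    have hXsub1 : Mod sat Γ₁ ⊆ Mod sat Γ₀ ∪ Mod sat Γ₁ ∪ Mod sat Γ₂ :=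
      fun x hx => Or.inl (Or.inr hx)
    have hXsub2 : Mod sat Γ₂ ⊆ Mod sat Γ₀ ∪ Mod sat Γ₁ ∪ Mod sat Γ₂ :=
      fun x hx => Or.inr hx
    have hcand : ∀ Γc : Finset L,
        Mod sat Γc ⊆ Mod sat Γ₀ ∪ Mod sat Γ₁ ∪ Mod sat Γ₂ →
        ¬ (cand sat (Mod sat Γ₀ ∪ Mod sat Γ₁ ∪ Mod sat Γ₂) (Mod sat Γc)).Nonempty := by
      rintro Γc hsubX ⟨B, hB1, x, hx1, hx2⟩
      exact hB1 hx2 (hsubX hx1)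
    have hKempty : ∀ Γc : Finset L, Mod sat (K ∪ Γc) = ∅ →
        ¬ (Mod sat Γc ∩ Mod sat K).Nonempty := by
      intro Γc hc ⟨x, hx⟩
      have : x ∈ Mod sat (K ∪ Γc) := by rw [Mod_union']; exact ⟨hx.2, hx.1⟩
      rw [hc] at this
      exact this
    obtain ⟨ω₀, hω₀⟩ := hne0
    obtain ⟨ω₁, hω₁⟩ := hne1
    obtain ⟨ω₂, hω₂⟩ := hne2
    -- compute the operator on Γ₀, Γ₁, Γ₂
    have m₀ : FOp sat (Mod sat Γ₀ ∪ Mod sat Γ₁ ∪ Mod sat Γ₂) (Mod sat K)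
        (Mod sat G₀) (Mod sat G₁) (Mod sat G₂) (Mod sat Γ₀) = Mod sat Γ₀ ∩ Mod sat G₀ := by
      refine FOp_pos3a sat _ _ _ _ _ _ (hKempty Γ₀ hK0) (hcand Γ₀ hXsub0)
        ⟨⟨ω₀, (hsub0 hω₀).1.1, hω₀⟩, ?_⟩
      rintro ⟨x, hx1, hx2⟩
      exact (hsub1 hx2).2 hx1
    have m₁ : FOp sat (Mod sat Γ₀ ∪ Mod sat Γ₁ ∪ Mod sat Γ₂) (Mod sat K)
        (Mod sat G₀) (Mod sat G₁) (Mod sat G₂) (Mod sat Γ₁) = Mod sat Γ₁ ∩ Mod sat G₁ := by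
      have hb : (Mod sat Γ₁ ∩ Mod sat G₁).Nonempty := ⟨ω₁, (hsub1 hω₁).1.1, hω₁⟩
      refine FOp_pos3b sat _ _ _ _ _ _ (hKempty Γ₁ hK1) (hcand Γ₁ hXsub1)
        (by rintro ⟨-, hbb⟩; exact hbb hb) ⟨hb, ?_⟩
      rintro ⟨x, hx1, hx2⟩
      exact (hsub2 hx2).2 hx1
    have m₂ : FOp sat (Mod sat Γ₀ ∪ Mod sat Γ₁ ∪ Mod sat Γ₂) (Mod sat K)
        (Mod sat G₀) (Mod sat G₁) (Mod sat G₂) (Mod sat Γ₂) = Mod sat Γ₂ ∩ Mod sat G₂ := by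
      have hc : (Mod sat Γ₂ ∩ Mod sat G₂).Nonempty := ⟨ω₂, (hsub2 hω₂).1.1, hω₂⟩
      refine FOp_pos3c sat _ _ _ _ _ _ (hKempty Γ₂ hK2) (hcand Γ₂ hXsub2)
        ?_ (by rintro ⟨-, hcc⟩; exact hcc hc) hc
      rintro ⟨⟨x, hx1, hx2⟩, -⟩
      exact (hsub0 hx2).2 hx1
    have e0 := hCompat K Γ₀
    have e1 := hCompat K Γ₁
    have e2 := hCompat K Γ₂
    rw [mod_loopOp, if_pos rfl, m₀] at e0
    rw [mod_loopOp, if_pos rfl, m₁] at e1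
    rw [mod_loopOp, if_pos rfl, m₂] at e2
    have hmin₀ : ω₀ ∈ minSet (Mod sat Γ₀) (assign K) := by
      rw [← e0]; exact ⟨(hsub0 hω₀).1.1, hω₀⟩
    have hmin₁ : ω₁ ∈ minSet (Mod sat Γ₁) (assign K) := by
      rw [← e1]; exact ⟨(hsub1 hω₁).1.1, hω₁⟩
    have hmin₂ : ω₂ ∈ minSet (Mod sat Γ₂) (assign K) := by
      rw [← e2]; exact ⟨(hsub2 hω₂).1.1, hω₂⟩
    have r02 : assign K ω₀ ω₂ := hmin₀.2 ω₂ (hsub2 hω₂).1.2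
    have r21 : assign K ω₂ ω₁ := hmin₂.2 ω₁ (hsub1 hω₁).1.2
    have r01 : assign K ω₀ ω₁ := (hTrans K) r02 r21
    have hω₀min₁ : ω₀ ∈ minSet (Mod sat Γ₁) (assign K) :=
      ⟨(hsub0 hω₀).1.2, fun ω' hω' => (hTrans K) r01 (hmin₁.2 ω' hω')⟩
    rw [← e1] at hω₀min₁
    exact (hsub1 hω₀min₁.2).2 (hsub0 hω₀).1.1

end BeliefRev
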